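/- Fix n ≥ 2, a bit vector x ∈ {0,1}^n, and j ∈ {1,…,n}. Consider the family consisting of B = [(2j − 1/2)/n² − 1, (2j − 1/2)/n²] together with A_i = [(2i − x_i)/n², (2i − x_i)/n² + 1] for all i ≤ j. If x_j = 1, then every two members of this family intersect, so the maximum independent set has size 1; if x_j = 0, then B and A_j are disjoint, so the maximum independent set has size at least 2. -/
import Mathlib


/-- In the augmented-indexing reduction, consider the family consisting of Bob's probe
interval `B` (index `0`) and Alice's intervals `A i` for `1 ≤ i ≤ j`. If `x j = 1` every
independent subfamily has at most one member; if `x j = 0` there is an independent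
subfamily of size at least `2`. -/
theorem probe_family_independence (n : ℕ) (hn : 2 ≤ n) (x : ℕ → ℝ)
    (hx : ∀ i, x i = 0 ∨ x i = 1) (j : ℕ) (hj : j ∈ Finset.Icc 1 n)
    (A : ℕ → Set ℝ)
    (hA : ∀ i, A i = Set.Icc ((2 * i - x i) / (n : ℝ) ^ 2)
      ((2 * i - x i) / (n : ℝ) ^ 2 + 1))
    (B : Set ℝ)
    (hB : B = Set.Icc ((2 * j - 1/2) / (n : ℝ) ^ 2 - 1) ((2 * j - 1/2) / (n : ℝ) ^ 2))
    (I : ℕ → Set ℝ) (hI : I 0 = B ∧ ∀ i, 1 ≤ i → I i = A i) :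
    (x j = 1 → ∀ S ⊆ insert 0 (Finset.Icc 1 j),
      (∀ a ∈ S, ∀ b ∈ S, a ≠ b → Disjoint (I a) (I b)) → S.card ≤ 1) ∧
    (x j = 0 → ∃ S ⊆ insert 0 (Finset.Icc 1 j),
      (∀ a ∈ S, ∀ b ∈ S, a ≠ b → Disjoint (I a) (I b)) ∧ 2 ≤ S.card) := by
  obtain ⟨hI0, hIA⟩ := hI
  simp only [Finset.mem_Icc] at hj
  obtain ⟨hj1, hjn⟩ := hj
  have hnR : (2:ℝ) ≤ (n:ℝ) := by exact_mod_cast hn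
  have hn2 : (4:ℝ) ≤ (n:ℝ)^2 := by nlinarith
  have hnpos : (0:ℝ) < (n:ℝ)^2 := by linarith
  have hjR : (1:ℝ) ≤ (j:ℝ) := by exact_mod_cast hj1
  have hjnR : (j:ℝ) ≤ (n:ℝ) := by exact_mod_cast hjn
  have hx01 : ∀ i, 0 ≤ x i ∧ x i ≤ 1 := by
    intro i; rcases hx i with h | h <;> rw [h] <;> constructor <;> norm_num
  -- division helpers
  have ediv : ∀ a b : ℝ, a ≤ b → a / (n:ℝ)^2 ≤ b / (n:ℝ)^2 := by
    intro a b h; gcongr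
  have ediv1 : ∀ a b : ℝ, a ≤ b + (n:ℝ)^2 → a / (n:ℝ)^2 ≤ b / (n:ℝ)^2 + 1 := by
    intro a b h
    have h2 : (b / (n:ℝ)^2 + 1) * (n:ℝ)^2 = b + (n:ℝ)^2 := by field_simp
    rw [div_le_iff₀ hnpos, h2]; exact h
  constructor
  · -- x j = 1 case: all pairs intersect
    intro hxj S hS hdisj
    by_contra hcard
    push_neg at hcard
    obtain ⟨a, b, ha, hb, hab⟩ := Finset.one_lt_card_iff.mp hcard
    -- any two members of the family intersect
    have key : ∀ a ∈ insert 0 (Finset.Icc 1 j), ∀ b ∈ insert 0 (Finset.Icc 1 j),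
        a ≠ b → ¬ Disjoint (I a) (I b) := by
      -- common-point lemma for B and A i, i ∈ [1, j]
      have hBA : ∀ i, 1 ≤ i → i ≤ j → ¬ Disjoint (I 0) (I i) := by
        intro i h1 h2
        rw [hI0, hIA i h1, hA i, hB, Set.not_disjoint_iff]
        refine ⟨(2 * i - x i) / (n:ℝ)^2, ⟨?_, ?_⟩, ⟨le_refl _, by linarith⟩⟩
        · -- c - 1 ≤ L_i
          have hiR : (1:ℝ) ≤ (i:ℝ) := by exact_mod_cast h1
          have h0 : (0:ℝ) ≤ (2 * i - x i) / (n:ℝ)^2 := by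
            apply div_nonneg _ (le_of_lt hnpos)
            have := (hx01 i).2; linarith
          have hc : (2 * j - 1/2) / (n:ℝ)^2 ≤ 1 := by
            rw [div_le_one hnpos]; nlinarith
          linarith
        · -- L_i ≤ c
          apply ediv
          rcases lt_or_eq_of_le h2 with h | h
          · have hiR : (i:ℝ) + 1 ≤ (j:ℝ) := by exact_mod_cast h
            have := (hx01 i).1; linarith
          · subst h; rw [hxj]; push_cast; linarith
      have hAA : ∀ i ∈ Finset.Icc 1 j, ∀ k ∈ Finset.Icc 1 j, ¬ Disjoint (I i) (I k) := by
        intro i hi k hk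
        simp only [Finset.mem_Icc] at hi hk
        rw [hIA i hi.1, hIA k hk.1, hA i, hA k, Set.not_disjoint_iff]
        have hiR : (1:ℝ) ≤ (i:ℝ) := by exact_mod_cast hi.1
        have hkR : (1:ℝ) ≤ (k:ℝ) := by exact_mod_cast hk.1
        have hijR : (i:ℝ) ≤ (j:ℝ) := by exact_mod_cast hi.2
        have hkjR : (k:ℝ) ≤ (j:ℝ) := by exact_mod_cast hk.2
        have hxi := hx01 i; have hxk := hx01 k
        refine ⟨max ((2 * i - x i) / (n:ℝ)^2) ((2 * k - x k) / (n:ℝ)^2),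
          ⟨le_max_left _ _, max_le (by linarith) (ediv1 _ _ (by nlinarith))⟩,
          ⟨le_max_right _ _, max_le (ediv1 _ _ (by nlinarith)) (by linarith)⟩⟩
      intro a ha b hb hab
      rcases Finset.mem_insert.mp ha with rfl | ha' <;>
        rcases Finset.mem_insert.mp hb with rfl | hb'
      · exact absurd rfl hab
      · simp only [Finset.mem_Icc] at hb'; exact hBA b hb'.1 hb'.2
      · simp only [Finset.mem_Icc] at ha'
        intro hd; exact hBA a ha'.1 ha'.2 hd.symm
      · exact hAA a ha' b hb'
    exact key a (hS ha) b (hS hb) hab (hdisj a ha b hb hab)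
  · -- x j = 0 case: B and A j are disjoint
    intro hxj
    refine ⟨{0, j}, ?_, ?_, ?_⟩
    · intro a ha
      simp only [Finset.mem_insert, Finset.mem_singleton, Finset.mem_Icc] at ha ⊢
      omega
    · have hdisj : Disjoint (I 0) (I j) := by
        rw [hI0, hIA j hj1, hA j, hB, Set.disjoint_left]
        intro t ht1 ht2
        simp only [Set.mem_Icc] at ht1 ht2
        have h1 : t ≤ (2 * j - 1/2) / (n:ℝ)^2 := ht1.2
        have h2 : (2 * j - x j) / (n:ℝ)^2 ≤ t := ht2.1
        rw [hxj] at h2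
        have hlt : (2 * (j:ℝ) - 1/2) / (n:ℝ)^2 < (2 * j - 0) / (n:ℝ)^2 := by
          apply (div_lt_div_iff_of_pos_right hnpos).mpr; linarith
        linarith
      intro a ha b hb hab
      rcases Finset.mem_insert.mp ha with rfl | ha' <;>
        rcases Finset.mem_insert.mp hb with rfl | hb'
      · exact absurd rfl hab
      · rw [Finset.mem_singleton] at hb'; rw [hb']; exact hdisj
      · rw [Finset.mem_singleton] at ha'; rw [ha']; exact hdisj.symm
      · rw [Finset.mem_singleton] at ha' hb'
        exact absurd (ha'.trans hb'.symm) hab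
    · rw [Finset.card_pair (by omega)]
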